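/- The Petersen graph does not admit a (1,1,2,3)-packing coloring, i.e. its vertex set cannot be partitioned into two independent sets, one 2-packing, and one 3-packing. -/

import Mathlib

/-- An `S`-packing coloring: a map `c : V → Fin k` such that any two distinct
vertices with the same color `i` are at distance greater than `s i`. -/
def SPacking {V : Type*} (G : SimpleGraph V) (k : ℕ) (s : Fin k → ℕ) : Prop :=
  ∃ c : V → Fin k, ∀ u v : V, u ≠ v → c u = c v → G.Reachable u v → s (c u) < G.dist u v

/-- The subdivision of `G`: each edge is replaced by a path of length two
through a new (subdivision) vertex. -/
def Subdiv {V : Type*} (G : SimpleGraph V) : SimpleGraph (V ⊕ G.edgeSet) :=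
  SimpleGraph.fromRel (fun a b => ∃ (v : V) (e : G.edgeSet),
    a = Sum.inl v ∧ b = Sum.inr e ∧ v ∈ (e : Sym2 V))

/-- The Petersen graph as the Kneser graph K(5,2). -/
def Petersen : SimpleGraph {s : Finset (Fin 5) // s.card = 2} where
  Adj a b := Disjoint (a : Finset (Fin 5)) (b : Finset (Fin 5))
  symm := ⟨fun a b h => h.symm⟩
  loopless := ⟨fun a h => by
    have h1 := disjoint_self.mp h
    have h2 := a.2
    simp [h1] at h2⟩


abbrev V5 := {s : Finset (Fin 5) // s.card = 2}

instance : DecidableRel Petersen.Adj := fun a b =>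
  inferInstanceAs (Decidable (Disjoint (a : Finset (Fin 5)) b))

set_option maxRecDepth 20000 in
lemma L1 : ∀ u v : V5, u ≠ v → Petersen.Adj u v ∨ ∃ w, Petersen.Adj u w ∧ Petersen.Adj w v := by
  decide

set_option maxRecDepth 20000 in
set_option synthInstance.maxSize 4000 in
set_option synthInstance.maxHeartbeats 1000000 in
set_option maxHeartbeats 4000000 in
lemma L4 : ∀ a b c d : V5, ¬Petersen.Adj a b → ¬Petersen.Adj a c → ¬Petersen.Adj a d →
    ¬Petersen.Adj b c → ¬Petersen.Adj b d → ¬Petersen.Adj c d →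
    a ≠ b → a ≠ c → a ≠ d → b ≠ c → b ≠ d → c ≠ d →
    ∃ i : Fin 5, i ∈ a.val ∧ i ∈ b.val ∧ i ∈ c.val ∧ i ∈ d.val := by
  decide

set_option maxRecDepth 20000 in
lemma star_struct : ∀ (i : Fin 5) (v : V5), i ∈ v.val → ∃ j : Fin 5, j ≠ i ∧ v.val = {i, j} := by
  decide

lemma fin5_pigeon : ∀ (i a b c d e : Fin 5), a ≠ i → b ≠ i → c ≠ i → d ≠ i → e ≠ i →
    (a = b ∨ a = c ∨ a = d ∨ a = e ∨ b = c ∨ b = d ∨ b = e ∨ c = d ∨ c = e ∨ d = e) := by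
  decide

set_option maxRecDepth 20000 in
lemma two_mem : ∀ (i i' : Fin 5) (v : V5), i ≠ i' → i ∈ v.val → i' ∈ v.val →
    v.val = {i, i'} := by decide

/-- Among five vertices all containing `i`, two are equal. -/
lemma L7 (i : Fin 5) (a b c d e : V5) (ha : i ∈ a.val) (hb : i ∈ b.val) (hc : i ∈ c.val)
    (hd : i ∈ d.val) (he : i ∈ e.val) :
    a = b ∨ a = c ∨ a = d ∨ a = e ∨ b = c ∨ b = d ∨ b = e ∨ c = d ∨ c = e ∨ d = e := by
  obtain ⟨ja, hja, hva⟩ := star_struct i a ha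
  obtain ⟨jb, hjb, hvb⟩ := star_struct i b hb
  obtain ⟨jc, hjc, hvc⟩ := star_struct i c hc
  obtain ⟨jd, hjd, hvd⟩ := star_struct i d hd
  obtain ⟨je, hje, hve⟩ := star_struct i e he
  have key : ∀ (x y : V5) (jx jy : Fin 5), x.val = {i, jx} → y.val = {i, jy} → jx = jy →
      x = y := fun x y jx jy hx hy h => Subtype.ext (hx.trans (by rw [h, ← hy]))
  rcases fin5_pigeon i ja jb jc jd je hja hjb hjc hjd hje with h|h|h|h|h|h|h|h|h|h
  · exact Or.inl (key _ _ _ _ hva hvb h)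
  · exact Or.inr (Or.inl (key _ _ _ _ hva hvc h))
  · exact Or.inr (Or.inr (Or.inl (key _ _ _ _ hva hvd h)))
  · exact Or.inr (Or.inr (Or.inr (Or.inl (key _ _ _ _ hva hve h))))
  · exact Or.inr (Or.inr (Or.inr (Or.inr (Or.inl (key _ _ _ _ hvb hvc h)))))
  · exact Or.inr (Or.inr (Or.inr (Or.inr (Or.inr (Or.inl (key _ _ _ _ hvb hvd h))))))
  · exact Or.inr (Or.inr (Or.inr (Or.inr (Or.inr (Or.inr (Or.inl (key _ _ _ _ hvb hve h)))))))
  · exact Or.inr (Or.inr (Or.inr (Or.inr (Or.inr (Or.inr (Or.inr (Or.inl (key _ _ _ _ hvc hvd h))))))))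
  · exact Or.inr (Or.inr (Or.inr (Or.inr (Or.inr (Or.inr (Or.inr (Or.inr (Or.inl (key _ _ _ _ hvc hve h)))))))))
  · exact Or.inr (Or.inr (Or.inr (Or.inr (Or.inr (Or.inr (Or.inr (Or.inr (Or.inr (key _ _ _ _ hvd hve h)))))))))

/-- No five distinct pairwise-nonadjacent vertices. -/
lemma L3' (a b c d e : V5)
    (nab : ¬Petersen.Adj a b) (nac : ¬Petersen.Adj a c) (nad : ¬Petersen.Adj a d)
    (nae : ¬Petersen.Adj a e) (nbc : ¬Petersen.Adj b c) (nbd : ¬Petersen.Adj b d)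
    (nbe : ¬Petersen.Adj b e) (ncd : ¬Petersen.Adj c d) (nce : ¬Petersen.Adj c e)
    (nde : ¬Petersen.Adj d e)
    (hab : a ≠ b) (hac : a ≠ c) (had : a ≠ d) (hae : a ≠ e) (hbc : b ≠ c) (hbd : b ≠ d)
    (hbe : b ≠ e) (hcd : c ≠ d) (hce : c ≠ e) (hde : d ≠ e) : False := by
  obtain ⟨i, hia, hib, hic, hid⟩ := L4 a b c d nab nac nad nbc nbd ncd hab hac had hbc hbd hcd
  obtain ⟨i', hia', hib', hic', hie⟩ := L4 a b c e nab nac nae nbc nbe nce hab hac hae hbc hbe hce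
  have hii : i = i' := by
    by_contra h
    have h1 := two_mem i i' a h hia hia'
    have h2 := two_mem i i' b h hib hib'
    exact hab (Subtype.ext (h1.trans h2.symm))
  subst hii
  rcases L7 i a b c d e hia hib hic hid hie with h|h|h|h|h|h|h|h|h|h <;>
    first
      | exact hab h | exact hac h | exact had h | exact hae h | exact hbc h
      | exact hbd h | exact hbe h | exact hcd h | exact hce h | exact hde h

lemma pick4 {α : Type*} [DecidableEq α] {A : Finset α} (h : 4 ≤ A.card) :
    ∃ a b c d, a ∈ A ∧ b ∈ A ∧ c ∈ A ∧ d ∈ A ∧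
      a ≠ b ∧ a ≠ c ∧ a ≠ d ∧ b ≠ c ∧ b ≠ d ∧ c ≠ d := by
  obtain ⟨a, ha⟩ := Finset.card_pos.mp (show 0 < A.card by omega)
  have e1 : 3 ≤ (A.erase a).card := by rw [Finset.card_erase_of_mem ha]; omega
  obtain ⟨b, hb⟩ := Finset.card_pos.mp (show 0 < (A.erase a).card by omega)
  have e2 : 2 ≤ ((A.erase a).erase b).card := by rw [Finset.card_erase_of_mem hb]; omega
  obtain ⟨c, hc⟩ := Finset.card_pos.mp (show 0 < ((A.erase a).erase b).card by omega)
  have e3 : 1 ≤ (((A.erase a).erase b).erase c).card := by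
    rw [Finset.card_erase_of_mem hc]; omega
  obtain ⟨d, hd⟩ := Finset.card_pos.mp (show 0 < (((A.erase a).erase b).erase c).card by omega)
  simp only [Finset.mem_erase] at hb hc hd
  exact ⟨a, b, c, d, ha, hb.2, hc.2.2, hd.2.2.2, (Ne.symm hb.1), (Ne.symm hc.2.1),
    (Ne.symm hd.2.2.1), (Ne.symm hc.1), (Ne.symm hd.2.1), (Ne.symm hd.1)⟩

lemma pick5 {α : Type*} [DecidableEq α] {A : Finset α} (h : 5 ≤ A.card) :
    ∃ a b c d e, a ∈ A ∧ b ∈ A ∧ c ∈ A ∧ d ∈ A ∧ e ∈ A ∧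
      a ≠ b ∧ a ≠ c ∧ a ≠ d ∧ a ≠ e ∧ b ≠ c ∧ b ≠ d ∧ b ≠ e ∧ c ≠ d ∧ c ≠ e ∧ d ≠ e := by
  obtain ⟨a, ha⟩ := Finset.card_pos.mp (show 0 < A.card by omega)
  have e1 : 4 ≤ (A.erase a).card := by rw [Finset.card_erase_of_mem ha]; omega
  obtain ⟨b, c, d, e, hb, hc, hd, he, hbc, hbd, hbe, hcd, hce, hde⟩ := pick4 e1
  simp only [Finset.mem_erase] at hb hc hd he
  exact ⟨a, b, c, d, e, ha, hb.2, hc.2, hd.2, he.2, Ne.symm hb.1, Ne.symm hc.1,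
    Ne.symm hd.1, Ne.symm he.1, hbc, hbd, hbe, hcd, hce, hde⟩

lemma card10 : (Finset.univ : Finset V5).card = 10 := by decide

theorem stmt_6 : ¬ SPacking Petersen 4 ![1, 1, 2, 3] := by
  rintro ⟨c, hc⟩
  -- distance facts
  have d1 : ∀ {u v : V5}, Petersen.Adj u v → Petersen.dist u v ≤ 1 := by
    intro u v h
    simpa using SimpleGraph.dist_le (SimpleGraph.Walk.cons h SimpleGraph.Walk.nil)
  have d2 : ∀ u v : V5, u ≠ v → Petersen.Reachable u v ∧ Petersen.dist u v ≤ 2 := by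
    intro u v hne
    rcases L1 u v hne with h | ⟨w, h1, h2⟩
    · exact ⟨h.reachable, le_trans (d1 h) (by omega)⟩
    · refine ⟨h1.reachable.trans h2.reachable, ?_⟩
      simpa using SimpleGraph.dist_le
        (SimpleGraph.Walk.cons h1 (SimpleGraph.Walk.cons h2 SimpleGraph.Walk.nil))
  have key : ∀ u v : V5, u ≠ v → c u = c v →
      (![1, 1, 2, 3] : Fin 4 → ℕ) (c u) < Petersen.dist u v ∧ Petersen.dist u v ≤ 2 := by
    intro u v hne hcc
    exact ⟨hc u v hne hcc (d2 u v hne).1, (d2 u v hne).2⟩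
  set F : Fin 4 → Finset V5 := fun k => Finset.univ.filter (fun v => c v = k) with hF
  have memF : ∀ (k : Fin 4) (v : V5), v ∈ F k ↔ c v = k := by
    intro k v; simp [hF]
  -- color classes 2 and 3 are singletons at most
  have h2 : (F 2).card ≤ 1 := by
    rw [Finset.card_le_one]
    intro a ha b hb
    by_contra hne
    have hca : c a = 2 := (memF 2 a).mp ha
    have hcb : c b = 2 := (memF 2 b).mp hb
    have := key a b hne (hca.trans hcb.symm)
    rw [hca] at this
    simp only [show (![1, 1, 2, 3] : Fin 4 → ℕ) 2 = 2 from rfl] at this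
    omega
  have h3 : (F 3).card ≤ 1 := by
    rw [Finset.card_le_one]
    intro a ha b hb
    by_contra hne
    have hca : c a = 3 := (memF 3 a).mp ha
    have hcb : c b = 3 := (memF 3 b).mp hb
    have := key a b hne (hca.trans hcb.symm)
    rw [hca] at this
    simp only [show (![1, 1, 2, 3] : Fin 4 → ℕ) 3 = 3 from rfl] at this
    omega
  -- classes are independent
  have hone : ∀ k : Fin 4, 1 ≤ (![1, 1, 2, 3] : Fin 4 → ℕ) k := by decide
  have indep : ∀ (k : Fin 4) (a b : V5), a ∈ F k → b ∈ F k → a ≠ b → ¬Petersen.Adj a b := by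
    intro k a b ha hb hne hadj
    have hca := (memF k a).mp ha
    have hcb := (memF k b).mp hb
    have hk := key a b hne (hca.trans hcb.symm)
    have := hone (c a)
    have := d1 hadj
    omega
  -- card bounds for independent classes
  have hle4 : ∀ k : Fin 4, (F k).card ≤ 4 := by
    intro k
    by_contra h
    obtain ⟨a, b, c', d, e, ha, hb, hcm, hd, he, hab, hac, had, hae, hbc, hbd, hbe, hcd,
      hce, hde⟩ := pick5 (show 5 ≤ (F k).card by omega)
    exact L3' a b c' d e (indep k a b ha hb hab) (indep k a c' ha hcm hac)
      (indep k a d ha hd had) (indep k a e ha he hae) (indep k b c' hb hcm hbc)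
      (indep k b d hb hd hbd) (indep k b e hb he hbe) (indep k c' d hcm hd hcd)
      (indep k c' e hcm he hce) (indep k d e hd he hde)
      hab hac had hae hbc hbd hbe hcd hce hde
  -- covering
  have cover : (Finset.univ : Finset V5) ⊆ F 0 ∪ F 1 ∪ F 2 ∪ F 3 := by
    intro v _
    have h4 : ∀ x : Fin 4, x = 0 ∨ x = 1 ∨ x = 2 ∨ x = 3 := by decide
    simp only [Finset.mem_union, memF]
    rcases h4 (c v) with h | h | h | h <;> tauto
  have hcards : 10 ≤ (F 0).card + (F 1).card + (F 2).card + (F 3).card := by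
    calc 10 = (Finset.univ : Finset V5).card := card10.symm
      _ ≤ (F 0 ∪ F 1 ∪ F 2 ∪ F 3).card := Finset.card_le_card cover
      _ ≤ (F 0 ∪ F 1 ∪ F 2).card + (F 3).card := Finset.card_union_le _ _
      _ ≤ (F 0 ∪ F 1).card + (F 2).card + (F 3).card := by
          have := Finset.card_union_le (F 0 ∪ F 1) (F 2); omega
      _ ≤ (F 0).card + (F 1).card + (F 2).card + (F 3).card := by
          have := Finset.card_union_le (F 0) (F 1); omega
  have hc0 : 4 ≤ (F 0).card := by have := hle4 1; omega
  have hc1 : 4 ≤ (F 1).card := by have := hle4 0; omega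
  -- extract stars
  obtain ⟨a, b, c', d, ha, hb, hcm, hd, hab, hac, had, hbc, hbd, hcd⟩ := pick4 hc0
  obtain ⟨a', b', c'', d', ha', hb', hcm', hd', hab', hac', had', hbc', hbd', hcd'⟩ :=
    pick4 hc1
  obtain ⟨i, hia, hib, hic, hid⟩ := L4 a b c' d (indep 0 a b ha hb hab)
    (indep 0 a c' ha hcm hac) (indep 0 a d ha hd had) (indep 0 b c' hb hcm hbc)
    (indep 0 b d hb hd hbd) (indep 0 c' d hcm hd hcd) hab hac had hbc hbd hcd
  obtain ⟨j, hja, hjb, hjc, hjd⟩ := L4 a' b' c'' d' (indep 1 a' b' ha' hb' hab')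
    (indep 1 a' c'' ha' hcm' hac') (indep 1 a' d' ha' hd' had')
    (indep 1 b' c'' hb' hcm' hbc') (indep 1 b' d' hb' hd' hbd')
    (indep 1 c'' d' hcm' hd' hcd') hab' hac' had' hbc' hbd' hcd'
  -- fibers 0 and 1 are disjoint
  have hdisj : ∀ v : V5, v ∈ F 0 → v ∈ F 1 → False := by
    intro v h0 h1
    have := ((memF 0 v).mp h0).symm.trans ((memF 1 v).mp h1)
    exact absurd this (by decide)
  by_cases hij : i = j
  · subst hij
    -- a' contains i, distinct from a b c' d (different fiber): five distinct star members
    have hne : ∀ x, x ∈ F 0 → a' ≠ x := by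
      intro x hx h
      exact hdisj x hx (h ▸ ha')
    rcases L7 i a b c' d a' hia hib hic hid hja with h|h|h|h|h|h|h|h|h|h
    · exact hab h
    · exact hac h
    · exact had h
    · exact hne a ha h.symm
    · exact hbc h
    · exact hbd h
    · exact hne b hb h.symm
    · exact hcd h
    · exact hne c' hcm h.symm
    · exact hne d hd h.symm
  · -- the pair {i, j} is in both stars
    have hp2 : ({i, j} : Finset (Fin 5)).card = 2 := Finset.card_pair hij
    set p : V5 := ⟨{i, j}, hp2⟩ with hp
    have hpi : i ∈ p.val := Finset.mem_insert_self _ _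
    have hpj : j ∈ p.val := by simp [hp]
    -- p equals one of a b c' d
    have hp0 : p ∈ F 0 := by
      rcases L7 i p a b c' d hpi hia hib hic hid with h|h|h|h|h|h|h|h|h|h
      · exact h ▸ ha
      · exact h ▸ hb
      · exact h ▸ hcm
      · exact h ▸ hd
      · exact absurd h hab
      · exact absurd h hac
      · exact absurd h had
      · exact absurd h hbc
      · exact absurd h hbd
      · exact absurd h hcd
    have hp1 : p ∈ F 1 := by
      rcases L7 j p a' b' c'' d' hpj hja hjb hjc hjd with h|h|h|h|h|h|h|h|h|h
      · exact h ▸ ha'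
      · exact h ▸ hb'
      · exact h ▸ hcm'
      · exact h ▸ hd'
      · exact absurd h hab'
      · exact absurd h hac'
      · exact absurd h had'
      · exact absurd h hbc'
      · exact absurd h hbd'
      · exact absurd h hcd'
    exact hdisj p hp0 hp1
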